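/- If an optimal feasible schedule of the shared multi-processor instance exists, then there exists an optimal feasible schedule that is synchronized. -/

import Mathlib

/-- A feasible schedule for a shared multi-processor instance: jobs `J` with
processing times `p`, `m` shared processors.  Each job `j` gets a shared
processor `mu j`, a finite set `iv j` of pairwise disjoint open bounded
subintervals of `(0,∞)` (represented by their endpoint pairs) on which `j`
executes on processor `mu j`, and a private completion time `c j ≥ 0` so that
`j` executes on its private processor exactly in `(0, c j)`.  The private time
plus the total length of the shared intervals equals `p j`, and intervals of
distinct jobs on a common shared processor are disjoint. -/
structure Schedule (J : Type) [Fintype J] [DecidableEq J] (m : ℕ) (p : J → ℝ) where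
  mu : J → Fin m
  iv : J → Finset (ℝ × ℝ)
  c : J → ℝ
  c_nonneg : ∀ j, 0 ≤ c j
  iv_valid : ∀ j, ∀ q ∈ iv j, 0 ≤ q.1 ∧ q.1 ≤ q.2
  iv_disjoint : ∀ j, ∀ q ∈ iv j, ∀ q' ∈ iv j, q ≠ q' → q.2 ≤ q'.1 ∨ q'.2 ≤ q.1
  total : ∀ j, c j + ∑ q ∈ iv j, (q.2 - q.1) = p j
  shared_disjoint : ∀ j j', j ≠ j' → mu j = mu j' →
    ∀ q ∈ iv j, ∀ q' ∈ iv j', q.2 ≤ q'.1 ∨ q'.2 ≤ q.1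

namespace Schedule

variable {J : Type} [Fintype J] [DecidableEq J] {m : ℕ} {p : J → ℝ}

/-- The overlap `t_j` of job `j`: total length of `(0, c j) ∩ ⋃ (iv j)`. -/
noncomputable def overlap (S : Schedule J m p) (j : J) : ℝ :=
  ∑ q ∈ S.iv j, max 0 (min (S.c j) q.2 - q.1)

/-- Total weighted overlap `Ω(S) = Σ_j w_j t_j`. -/
noncomputable def Omega (S : Schedule J m p) (w : J → ℝ) : ℝ :=
  ∑ j, w j * S.overlap j

/-- Completion time of `j` on its shared processor: the supremum of right
endpoints of its shared intervals, `0` if there are none. -/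
noncomputable def ftime (S : Schedule J m p) (j : J) : ℝ :=
  WithBot.unbotD 0 (((S.iv j).image Prod.snd).max)

/-- A schedule is normal if every job completes on the shared processor no
later than on its private processor. -/
def Normal (S : Schedule J m p) : Prop := ∀ j, S.ftime j ≤ S.c j

/-- A schedule is optimal if it maximizes the total weighted overlap. -/
def Optimal (S : Schedule J m p) (w : J → ℝ) : Prop :=
  ∀ S' : Schedule J m p, S'.Omega w ≤ S.Omega w

end Schedule

/-- A schedule is non-preemptive if each job uses at most one shared interval. -/
def Schedule.NonPreemptive {J : Type} [Fintype J] [DecidableEq J] {m : ℕ} {p : J → ℝ}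
    (S : Schedule J m p) : Prop :=
  ∀ j, (S.iv j).card ≤ 1

/-- A schedule is synchronized if it is normal, non-preemptive, and every job
that actually uses a shared processor completes there exactly at its private
completion time. -/
def Schedule.Synchronized {J : Type} [Fintype J] [DecidableEq J] {m : ℕ} {p : J → ℝ}
    (S : Schedule J m p) : Prop :=
  S.Normal ∧ S.NonPreemptive ∧ ∀ j, S.iv j ≠ ∅ → S.ftime j = S.c j


section AuxProof
open scoped Classical
set_option linter.unusedSectionVars false
set_option linter.unusedVariables false
set_option maxHeartbeats 1600000

variable {J : Type} [Fintype J] [DecidableEq J]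

/-- Total length of pairwise disjoint subintervals of `[0, M]` is at most `M`. -/
theorem sum_len_le {ι : Type*} [DecidableEq ι] (F : Finset ι) (a b : ι → ℝ) :
    ∀ M : ℝ, 0 ≤ M → (∀ i ∈ F, 0 ≤ a i ∧ a i ≤ b i ∧ b i ≤ M) →
    (∀ i ∈ F, ∀ i' ∈ F, i ≠ i' → a i < b i → a i' < b i' → (b i ≤ a i' ∨ b i' ≤ a i)) →
    ∑ i ∈ F, (b i - a i) ≤ M := by
  induction F using Finset.strongInduction with
  | _ F IH =>
    intro M hM h1 h2
    set F' := F.filter (fun i => a i < b i) with hF'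
    have hsum : ∑ i ∈ F, (b i - a i) = ∑ i ∈ F', (b i - a i) := by
      rw [hF', Finset.sum_filter_of_ne]
      intro x hx hne
      rcases lt_or_eq_of_le (h1 x hx).2.1 with h | h
      · exact h
      · exact absurd (by rw [h]; ring) hne
    rcases F'.eq_empty_or_nonempty with he | hne
    · rw [hsum, he, Finset.sum_empty]; exact hM
    · obtain ⟨i0, hi0, hmax⟩ := F'.exists_max_image b hne
      have hi0F : i0 ∈ F := (Finset.mem_filter.mp hi0).1
      have hi0lt : a i0 < b i0 := (Finset.mem_filter.mp hi0).2
      have hsub : F'.erase i0 ⊂ F := by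
        refine Finset.ssubset_iff_of_subset (fun x hx => (Finset.mem_filter.mp (Finset.mem_of_mem_erase hx)).1) |>.mpr ?_
        exact ⟨i0, hi0F, fun h => (Finset.notMem_erase i0 F') h⟩
      have key : ∀ i ∈ F'.erase i0, b i ≤ a i0 := by
        intro i hi
        have hiF' := Finset.mem_of_mem_erase hi
        have hiF := (Finset.mem_filter.mp hiF').1
        have hilt := (Finset.mem_filter.mp hiF').2
        have hne' : i ≠ i0 := Finset.ne_of_mem_erase hi
        rcases h2 i hiF i0 hi0F hne' hilt hi0lt with h | h
        · exact h
        · exact absurd (lt_of_le_of_lt h hilt) (not_lt.mpr (hmax i hiF'))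
      have IH' : ∑ i ∈ F'.erase i0, (b i - a i) ≤ a i0 := by
        refine IH _ hsub (a i0) (h1 i0 hi0F).1 ?_ ?_
        · intro i hi
          have hiF := (Finset.mem_filter.mp (Finset.mem_of_mem_erase hi)).1
          exact ⟨(h1 i hiF).1, (h1 i hiF).2.1, key i hi⟩
        · intro i hi i' hi' hne hlt hlt'
          exact h2 i (Finset.mem_filter.mp (Finset.mem_of_mem_erase hi)).1
            i' (Finset.mem_filter.mp (Finset.mem_of_mem_erase hi')).1 hne hlt hlt'
      rw [hsum, ← Finset.add_sum_erase _ _ hi0]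
      have : b i0 ≤ M := (h1 i0 hi0F).2.2
      linarith

/-- Geometric rank sum. -/
theorem rank_sum (ord : J → ℕ) :
    ∀ S : Finset J, Set.InjOn ord S →
    ∑ x ∈ S, ((1:ℝ)/2) ^ ((S.filter (fun y => ord y < ord x)).card + 1)
      = 1 - ((1:ℝ)/2) ^ S.card := by
  intro S
  induction S using Finset.strongInduction with
  | _ S IH =>
    intro hinj
    rcases S.eq_empty_or_nonempty with he | hne
    · simp [he]
    · obtain ⟨x0, hx0, hmax⟩ := S.exists_max_image ord hne
      have herase : ∀ y ∈ S.erase x0, ord y < ord x0 := by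
        intro y hy
        have hyS := Finset.mem_of_mem_erase hy
        rcases lt_or_eq_of_le (hmax y hyS) with h | h
        · exact h
        · exact absurd (hinj hyS hx0 h) (Finset.ne_of_mem_erase hy)
      have hrank0 : (S.filter (fun y => ord y < ord x0)).card = S.card - 1 := by
        have : S.filter (fun y => ord y < ord x0) = S.erase x0 := by
          apply Finset.ext; intro y
          simp only [Finset.mem_filter, Finset.mem_erase]
          constructor
          · rintro ⟨hy, hlt⟩
            exact ⟨fun h => by simp [h] at hlt, hy⟩
          · rintro ⟨hne', hy⟩
            exact ⟨hy, herase y (Finset.mem_erase.mpr ⟨hne', hy⟩)⟩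
        rw [this, Finset.card_erase_of_mem hx0]
      have hrank : ∀ y ∈ S.erase x0,
          (S.filter (fun z => ord z < ord y)).card
            = ((S.erase x0).filter (fun z => ord z < ord y)).card := by
        intro y hy
        congr 1
        apply Finset.ext; intro z
        simp only [Finset.mem_filter, Finset.mem_erase]
        constructor
        · rintro ⟨hz, hlt⟩
          refine ⟨⟨fun h => ?_, hz⟩, hlt⟩
          subst h
          exact absurd (lt_trans (herase y hy) hlt) (lt_irrefl _)
        · rintro ⟨⟨_, hz⟩, hlt⟩; exact ⟨hz, hlt⟩
      have hE : S.erase x0 ⊂ S := Finset.erase_ssubset hx0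
      have hinj' : Set.InjOn ord (S.erase x0) := by
        intro a ha b hb hab
        exact hinj (Finset.mem_of_mem_erase ha) (Finset.mem_of_mem_erase hb) hab
      rw [← Finset.add_sum_erase _ _ hx0, hrank0]
      rw [Finset.sum_congr rfl (fun y hy => by rw [hrank y hy])]
      rw [IH _ hE hinj', Finset.card_erase_of_mem hx0]
      have hcard : 1 ≤ S.card := Finset.card_pos.mpr hne
      have h3 : ((1:ℝ)/2) ^ (S.card - 1 + 1) = ((1:ℝ)/2) ^ S.card := by
        congr 1; omega
      rw [h3]
      have h2 : ((1:ℝ)/2) ^ S.card = ((1:ℝ)/2) ^ (S.card - 1) * (1/2) := by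
        rw [← pow_succ]; congr 1; omega
      rw [h2]; ring

/-- Sum of `τ` over jobs of `A` strictly `ord`-before `j`. -/
noncomputable def preS (A : Finset J) (ord : J → ℕ) (τ : J → ℝ) (j : J) : ℝ :=
  ∑ x ∈ A.filter (fun x => ord x < ord j), τ x

/-- Chain-feasible overlap vectors for one shared processor. -/
def KSet (A : Finset J) (ord : J → ℕ) (p : J → ℝ) : Set (J → ℝ) :=
  {τ | (∀ j, j ∉ A → τ j = 0) ∧ (∀ j ∈ A, 0 ≤ τ j) ∧
    ∀ j ∈ A, preS A ord τ j + 2 * τ j ≤ p j}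

/-- Overlap vectors realizable by a synchronized schedule on one processor. -/
def SyncOn (A : Finset J) (p : J → ℝ) (τ : J → ℝ) : Prop :=
  (∀ j, j ∉ A → τ j = 0) ∧ (∀ j ∈ A, 0 ≤ τ j ∧ 2 * τ j ≤ p j) ∧
  ∀ j ∈ A, ∀ j' ∈ A, j ≠ j' → τ j ≠ 0 → τ j' ≠ 0 →
    (p j - τ j ≤ p j' - 2 * τ j' ∨ p j' - τ j' ≤ p j - 2 * τ j)

theorem continuous_preS (A : Finset J) (ord : J → ℕ) (j : J) :
    Continuous (fun τ : J → ℝ => preS A ord τ j) :=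
  continuous_finset_sum _ (fun x _ => continuous_apply x)

theorem isClosed_KSet (A : Finset J) (ord : J → ℕ) (p : J → ℝ) :
    IsClosed (KSet A ord p) := by
  have : KSet A ord p =
      (⋂ j ∈ ({j | j ∉ A} : Set J), {τ : J → ℝ | τ j = 0}) ∩
      ((⋂ j ∈ (A : Set J), {τ : J → ℝ | 0 ≤ τ j}) ∩
       (⋂ j ∈ (A : Set J), {τ : J → ℝ | preS A ord τ j + 2 * τ j ≤ p j})) := by
    ext τ
    constructor
    · rintro ⟨h1, h2, h3⟩
      refine ⟨?_, ?_, ?_⟩ <;> simp only [Set.mem_iInter, Set.mem_setOf_eq, Finset.mem_coe]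
      · exact h1
      · exact h2
      · exact h3
    · rintro ⟨h1, h2, h3⟩
      simp only [Set.mem_iInter, Set.mem_setOf_eq, Finset.mem_coe] at h1 h2 h3
      exact ⟨h1, h2, h3⟩
  rw [this]
  refine IsClosed.inter ?_ (IsClosed.inter ?_ ?_)
  · exact isClosed_biInter (fun j _ => isClosed_eq (continuous_apply j) continuous_const)
  · exact isClosed_biInter (fun j _ => isClosed_le continuous_const (continuous_apply j))
  · exact isClosed_biInter (fun j _ => isClosed_le
      ((continuous_preS A ord j).add (continuous_const.mul (continuous_apply j))) continuous_const)

theorem preS_nonneg (A : Finset J) (ord : J → ℕ) (p : J → ℝ) {τ : J → ℝ}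
    (hτ : τ ∈ KSet A ord p) (j : J) : 0 ≤ preS A ord τ j :=
  Finset.sum_nonneg (fun x hx => hτ.2.1 x (Finset.mem_filter.mp hx).1)

theorem isCompact_KSet (A : Finset J) (ord : J → ℕ) (p : J → ℝ)
    (hp : ∀ j ∈ A, 0 ≤ p j) : IsCompact (KSet A ord p) := by
  refine IsCompact.of_isClosed_subset
    (isCompact_univ_pi (fun j => isCompact_Icc (a := (0:ℝ)) (b := max 0 (p j))))
    (isClosed_KSet A ord p) ?_
  intro τ hτ
  rw [Set.mem_univ_pi]
  intro j
  by_cases hj : j ∈ A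
  · constructor
    · exact hτ.2.1 j hj
    · have h1 := hτ.2.2 j hj
      have h2 := preS_nonneg A ord p hτ j
      have : τ j ≤ p j := by linarith [hτ.2.1 j hj]
      exact le_trans this (le_max_right _ _)
  · rw [hτ.1 j hj]; exact ⟨le_refl _, le_max_left _ _⟩

theorem KSet_nonempty (A : Finset J) (ord : J → ℕ) (p : J → ℝ)
    (hp : ∀ j ∈ A, 0 ≤ p j) : (KSet A ord p).Nonempty := by
  refine ⟨0, fun j _ => rfl, fun j _ => le_refl _, fun j hj => ?_⟩
  have : preS A ord (0 : J → ℝ) j = 0 := Finset.sum_const_zero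
  rw [this]
  simpa using hp j hj

/-- The cascade perturbation: if all jobs have positive overlap and the
`ord`-least job `j1` has slack, there is a two-sided feasible perturbation
direction raising `τ j1`. -/
theorem cascade (A : Finset J) (ord : J → ℕ) (p : J → ℝ)
    (hinj : Set.InjOn ord ↑A) (τ : J → ℝ) (hτ : τ ∈ KSet A ord p)
    (j1 : J) (hj1A : j1 ∈ A) (hj1min : ∀ x ∈ A, ord j1 ≤ ord x)
    (hpos : ∀ j ∈ A, 0 < τ j)
    (hslack : preS A ord τ j1 + 2 * τ j1 < p j1) :
    ∃ (co : J → ℝ) (δ0 : ℝ), 0 < δ0 ∧ co j1 = 1 ∧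
      ∀ ε : ℝ, |ε| ≤ δ0 → (fun j => τ j + ε * co j) ∈ KSet A ord p := by
  set T : Finset J :=
    A.filter (fun k => k ≠ j1 ∧ preS A ord τ k + 2 * τ k = p k) with hT
  set rk : J → ℕ := fun j => (T.filter (fun x => ord x < ord j)).card with hrk
  set co : J → ℝ :=
    fun j => if j = j1 then 1 else if j ∈ T then -(((1:ℝ)/2) ^ (rk j + 1)) else 0 with hco
  set slk : J → ℝ := fun k => p k - preS A ord τ k - 2 * τ k with hslk
  set g : J → ℝ := fun k =>
    if k = j1 then min (τ j1) (slk j1 / 2) else if k ∈ T then τ k else slk k / 2 with hg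
  have hAne : A.Nonempty := ⟨j1, hj1A⟩
  have hTsub : T ⊆ A := Finset.filter_subset _ _
  have hTj1 : j1 ∉ T := by
    intro h
    exact ((Finset.mem_filter.mp h).2.1) rfl
  -- positivity of g
  have hgpos : ∀ k ∈ A, 0 < g k := by
    intro k hk
    by_cases h1 : k = j1
    · subst h1
      simp only [hg, if_pos rfl]
      refine lt_min (hpos k hk) ?_
      simp only [hslk]
      linarith
    · by_cases h2 : k ∈ T
      · simp only [hg, if_neg h1, if_pos h2]
        exact hpos k hk
      · simp only [hg, if_neg h1, if_neg h2]
        have hle := hτ.2.2 k hk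
        have hne : preS A ord τ k + 2 * τ k ≠ p k := by
          intro hceq
          exact h2 (Finset.mem_filter.mpr ⟨hk, h1, hceq⟩)
        simp only [hslk]
        have : preS A ord τ k + 2 * τ k < p k := lt_of_le_of_ne hle hne
        linarith
  set δ0 : ℝ := A.inf' hAne g with hδ0def
  have hδ0pos : 0 < δ0 := by
    rw [hδ0def, Finset.lt_inf'_iff]
    exact hgpos
  have hδ0le : ∀ k ∈ A, δ0 ≤ g k := fun k hk => Finset.inf'_le _ hk
  -- |co| ≤ 1
  have hcoabs : ∀ j, |co j| ≤ 1 := by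
    intro j
    simp only [hco]
    by_cases h1 : j = j1
    · simp [h1]
    · by_cases h2 : j ∈ T
      · simp only [if_neg h1, if_pos h2, abs_neg, abs_pow]
        rw [abs_of_nonneg (by norm_num : (0:ℝ) ≤ 1/2)]
        calc ((1:ℝ)/2) ^ (rk j + 1) ≤ 1 ^ (rk j + 1) := by
              apply pow_le_pow_left₀ (by norm_num) (by norm_num)
          _ = 1 := one_pow _
      · simp [if_neg h1, if_neg h2]
  -- prefix sums of co
  have hj1pre : ∀ j ∈ A, j ≠ j1 → j1 ∈ A.filter (fun x => ord x < ord j) := by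
    intro j hj hne
    refine Finset.mem_filter.mpr ⟨hj1A, ?_⟩
    rcases lt_or_eq_of_le (hj1min j hj) with h | h
    · exact h
    · exact absurd (hinj hj1A hj h).symm hne
  -- main prefix computation
  have hpre : ∀ j ∈ A, j ≠ j1 →
      (∑ x ∈ A.filter (fun x => ord x < ord j), co x) = ((1:ℝ)/2) ^ (rk j) := by
    intro j hj hne
    set P : J → Prop := fun x => ord x < ord j with hP
    have hj1P : j1 ∈ A.filter (fun x => P x) := hj1pre j hj hne
    rw [← Finset.add_sum_erase _ _ hj1P]
    have hcoj1 : co j1 = 1 := by simp [hco]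
    have hTP : ∀ x ∈ (A.filter (fun x => P x)).erase j1, co x ≠ 0 → x ∈ T.filter (fun x => P x) := by
      intro x hx hcone
      have hxe := Finset.mem_of_mem_erase hx
      have hxne : x ≠ j1 := Finset.ne_of_mem_erase hx
      have hxT : x ∈ T := by
        by_contra hxT
        exact hcone (by simp [hco, if_neg hxne, if_neg hxT])
      exact Finset.mem_filter.mpr ⟨hxT, (Finset.mem_filter.mp hxe).2⟩
    have hsum2 : (∑ x ∈ (A.filter (fun x => P x)).erase j1, co x)
        = ∑ x ∈ T.filter (fun x => P x), co x := by
      rw [← Finset.sum_filter_of_ne (s := (A.filter (fun x => P x)).erase j1)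
        (p := fun x => x ∈ T.filter (fun x => P x)) (f := co) hTP]
      apply Finset.sum_congr
      · apply Finset.ext
        intro x
        simp only [Finset.mem_filter, Finset.mem_erase]
        constructor
        · rintro ⟨⟨hx1, hx2⟩, hx3, hx4⟩
          exact ⟨hx3, hx4⟩
        · rintro ⟨hx3, hx4⟩
          have hxA := hTsub hx3
          have : x ≠ j1 := fun h => hTj1 (h ▸ hx3)
          exact ⟨⟨this, hxA, hx4⟩, hx3, hx4⟩
      · intros; rfl
    have hrkeq : ∀ x ∈ T.filter (fun x => P x),
        co x = -(((1:ℝ)/2) ^ (((T.filter (fun x => P x)).filter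
          (fun y => ord y < ord x)).card + 1)) := by
      intro x hx
      obtain ⟨hxT, hxP⟩ := Finset.mem_filter.mp hx
      have hxne : x ≠ j1 := fun h => hTj1 (h ▸ hxT)
      have : (T.filter (fun y => ord y < ord x))
          = ((T.filter (fun x => P x)).filter (fun y => ord y < ord x)) := by
        apply Finset.ext
        intro z
        simp only [Finset.mem_filter]
        constructor
        · rintro ⟨hzT, hzx⟩
          exact ⟨⟨hzT, lt_trans hzx hxP⟩, hzx⟩
        · rintro ⟨⟨hzT, _⟩, hzx⟩
          exact ⟨hzT, hzx⟩
      simp only [hco, if_neg hxne, if_pos hxT, hrk]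
      rw [this]
    have hinjT : Set.InjOn ord ↑(T.filter (fun x => P x)) := by
      intro x hx y hy hxy
      exact hinj (hTsub (Finset.mem_filter.mp (Finset.mem_coe.mp hx)).1)
        (hTsub (Finset.mem_filter.mp (Finset.mem_coe.mp hy)).1) hxy
    rw [hsum2, Finset.sum_congr rfl hrkeq, Finset.sum_neg_distrib,
      rank_sum ord (T.filter (fun x => P x)) hinjT, hcoj1]
    have hrkj : rk j = (T.filter (fun x => P x)).card := by
      simp only [hrk, hP]
    rw [hrkj]
    ring
  refine ⟨co, δ0, hδ0pos, by simp [hco], ?_⟩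
  intro ε hε
  have hεle : ε ≤ δ0 := le_trans (le_abs_self ε) hε
  have hεge : -δ0 ≤ ε := by
    have := neg_abs_le ε
    linarith
  refine ⟨?_, ?_, ?_⟩
  · -- zero off A
    intro j hj
    have h1 : j ≠ j1 := fun h => hj (h ▸ hj1A)
    have h2 : j ∉ T := fun h => hj (hTsub h)
    simp only [hco, if_neg h1, if_neg h2]
    rw [hτ.1 j hj]; ring
  · -- nonneg
    intro j hj
    show 0 ≤ τ j + ε * co j
    have habs : |ε * co j| ≤ δ0 := by
      rw [abs_mul]
      calc |ε| * |co j| ≤ δ0 * 1 :=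
            mul_le_mul hε (hcoabs j) (abs_nonneg _) (le_of_lt hδ0pos)
        _ = δ0 := mul_one _
    have hlow : -δ0 ≤ ε * co j := by
      have := neg_abs_le (ε * co j)
      linarith
    by_cases h1 : j = j1
    · subst h1
      have : g j ≤ τ j := by simp only [hg, if_pos rfl]; exact min_le_left _ _
      have := hδ0le j hj
      linarith
    · by_cases h2 : j ∈ T
      · have : g j = τ j := by simp only [hg, if_neg h1, if_pos h2]
        have := hδ0le j hj
        linarith [this]
      · have : co j = 0 := by simp [hco, if_neg h1, if_neg h2]
        rw [this]
        have := hpos j hj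
        linarith
  · -- chain constraints
    intro j hj
    show preS A ord (fun x => τ x + ε * co x) j + 2 * ((fun x => τ x + ε * co x) j) ≤ p j
    have hsplit : preS A ord (fun x => τ x + ε * co x) j
        = preS A ord τ j + ε * ∑ x ∈ A.filter (fun x => ord x < ord j), co x := by
      simp only [preS]
      rw [Finset.sum_add_distrib, Finset.mul_sum]
    rw [show (2 : ℝ) * (fun x => τ x + ε * co x) j = 2 * (τ j + ε * co j) from rfl] at *
    by_cases h1 : j = j1
    · subst h1
      have hempty : A.filter (fun x => ord x < ord j) = ∅ := by
        apply Finset.filter_false_of_mem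
        intro x hx
        exact not_lt.mpr (hj1min x hx)
      have hpre0 : preS A ord τ j = 0 := by
        simp only [preS, hempty, Finset.sum_empty]
      rw [hsplit, hempty, Finset.sum_empty, hpre0]
      have hgj : g j ≤ slk j / 2 := by
        simp only [hg, if_pos rfl]
        exact min_le_right _ _
      have hδg := hδ0le j hj
      have hcoj : co j = 1 := by simp [hco]
      have hslkval : slk j = p j - preS A ord τ j - 2 * τ j := rfl
      rw [hcoj]
      rw [hpre0] at hslkval
      linarith
    · have hpres := hpre j hj h1
      rw [hsplit, hpres]
      have hpow1 : ((1:ℝ)/2) ^ (rk j) ≤ 1 := by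
        calc ((1:ℝ)/2) ^ (rk j) ≤ 1 ^ (rk j) := by
              apply pow_le_pow_left₀ (by norm_num) (by norm_num)
          _ = 1 := one_pow _
      have hpowpos : (0:ℝ) < ((1:ℝ)/2) ^ (rk j) := by positivity
      by_cases h2 : j ∈ T
      · have hcoj : co j = -(((1:ℝ)/2) ^ (rk j + 1)) := by
          simp only [hco, if_neg h1, if_pos h2]
        have htight : preS A ord τ j + 2 * τ j = p j :=
          (Finset.mem_filter.mp h2).2.2
        rw [hcoj]
        have hps : ((1:ℝ)/2) ^ (rk j + 1) = ((1:ℝ)/2) ^ (rk j) * (1/2) := pow_succ _ _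
        nlinarith [hps]
      · have hcoj : co j = 0 := by simp [hco, if_neg h1, if_neg h2]
        have hgj : g j = slk j / 2 := by simp only [hg, if_neg h1, if_neg h2]
        have hδg := hδ0le j hj
        have hslkval : slk j = p j - preS A ord τ j - 2 * τ j := rfl
        have hbound : ε * ((1:ℝ)/2) ^ (rk j) ≤ δ0 := by
          calc ε * ((1:ℝ)/2) ^ (rk j) ≤ |ε| * ((1:ℝ)/2) ^ (rk j) :=
                mul_le_mul_of_nonneg_right (le_abs_self ε) (le_of_lt hpowpos)
            _ ≤ δ0 * 1 := mul_le_mul hε hpow1 (le_of_lt hpowpos) (le_of_lt hδ0pos)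
            _ = δ0 := mul_one _
        rw [hcoj]
        linarith

/-- The crux: any chain-feasible overlap vector is weight-dominated by a
synchronized-feasible one. -/
theorem crux (ord : J → ℕ) (w : J → ℝ) :
    ∀ A : Finset J, ∀ p : J → ℝ, (∀ j ∈ A, 0 ≤ p j) → (∀ j ∈ A, 0 < w j) →
    Set.InjOn ord ↑A → ∀ τ ∈ KSet A ord p,
    ∃ τ', SyncOn A p τ' ∧ ∑ j ∈ A, w j * τ j ≤ ∑ j ∈ A, w j * τ' j := by
  intro A
  induction A using Finset.strongInduction with
  | _ A IH =>
  intro p hp hw hinj τ hτ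
  rcases A.eq_empty_or_nonempty with hAe | hA
  · subst hAe
    refine ⟨0, ⟨fun j _ => rfl, fun j hj => absurd hj (Finset.notMem_empty j), ?_⟩, ?_⟩
    · intro j hj; exact absurd hj (Finset.notMem_empty j)
    · simp
  -- global argmax over KSet
  set Φ : (J → ℝ) → ℝ := fun σ => ∑ j ∈ A, w j * σ j with hΦ
  have hΦcont : Continuous Φ :=
    continuous_finset_sum _ (fun j _ => continuous_const.mul (continuous_apply j))
  obtain ⟨τM, hτM, hmaxM⟩ := (isCompact_KSet A ord p hp).exists_isMaxOn
    (KSet_nonempty A ord p hp) hΦcont.continuousOn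
  obtain ⟨j1, hj1A, hj1min⟩ := A.exists_min_image ord hA
  set G : Set (J → ℝ) := KSet A ord p ∩ {σ | Φ σ = Φ τM} with hG
  have hGc : IsCompact G := ((isCompact_KSet A ord p hp).inter_right
    (isClosed_eq hΦcont continuous_const))
  obtain ⟨τs, hτsG, hmax1⟩ := hGc.exists_isMaxOn ⟨τM, hτM, rfl⟩
    (continuous_apply j1).continuousOn
  have hτsK : τs ∈ KSet A ord p := hτsG.1
  have hτsmax : ∀ y ∈ KSet A ord p, Φ y ≤ Φ τs := by
    intro y hy
    have := hmaxM hy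
    have h2 : Φ τs = Φ τM := hτsG.2
    simp only [Set.mem_setOf_eq] at this
    linarith
  have hτval : Φ τ ≤ Φ τs := hτsmax τ hτ
  by_cases hz : ∃ j ∈ A, τs j = 0
  · -- drop a zero job
    obtain ⟨j, hjA, hj0⟩ := hz
    have hsub : A.erase j ⊂ A := Finset.erase_ssubset hjA
    have hτsK' : τs ∈ KSet (A.erase j) ord p := by
      refine ⟨?_, ?_, ?_⟩
      · intro x hx
        by_cases hxj : x = j
        · exact hxj ▸ hj0
        · exact hτsK.1 x (fun hxA => hx (Finset.mem_erase.mpr ⟨hxj, hxA⟩))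
      · exact fun x hx => hτsK.2.1 x (Finset.mem_of_mem_erase hx)
      · intro x hx
        refine le_trans ?_ (hτsK.2.2 x (Finset.mem_of_mem_erase hx))
        have hm : preS (A.erase j) ord τs x ≤ preS A ord τs x := by
          apply Finset.sum_le_sum_of_subset_of_nonneg
          · exact Finset.filter_subset_filter _ (Finset.erase_subset _ _)
          · intro y hy _
            exact hτsK.2.1 y (Finset.mem_filter.mp hy).1
        linarith
    obtain ⟨τ', hsync', hsum'⟩ := IH (A.erase j) hsub p
      (fun x hx => hp x (Finset.mem_of_mem_erase hx))
      (fun x hx => hw x (Finset.mem_of_mem_erase hx))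
      (hinj.mono (Finset.coe_subset.mpr (Finset.erase_subset _ _))) τs hτsK'
    have hτ'j : τ' j = 0 := hsync'.1 j (Finset.notMem_erase j A)
    refine ⟨τ', ⟨?_, ?_, ?_⟩, ?_⟩
    · intro x hx
      exact hsync'.1 x (fun hxe => hx (Finset.mem_of_mem_erase hxe))
    · intro x hx
      by_cases hxj : x = j
      · subst hxj
        rw [hτ'j]
        exact ⟨le_refl _, by linarith [hp x hx]⟩
      · exact hsync'.2.1 x (Finset.mem_erase.mpr ⟨hxj, hx⟩)
    · intro x hx x' hx' hne h0 h0'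
      have hxj : x ≠ j := fun h => h0 (h ▸ hτ'j)
      have hx'j : x' ≠ j := fun h => h0' (h ▸ hτ'j)
      exact hsync'.2.2 x (Finset.mem_erase.mpr ⟨hxj, hx⟩)
        x' (Finset.mem_erase.mpr ⟨hx'j, hx'⟩) hne h0 h0'
    · have e1 : ∑ x ∈ A, w x * τs x = ∑ x ∈ A.erase j, w x * τs x := by
        rw [← Finset.add_sum_erase _ _ hjA, hj0]
        ring
      have e2 : ∑ x ∈ A, w x * τ' x = ∑ x ∈ A.erase j, w x * τ' x := by
        rw [← Finset.add_sum_erase _ _ hjA, hτ'j]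
        ring
      calc ∑ x ∈ A, w x * τ x ≤ ∑ x ∈ A, w x * τs x := hτval
        _ = ∑ x ∈ A.erase j, w x * τs x := e1
        _ ≤ ∑ x ∈ A.erase j, w x * τ' x := hsum'
        _ = ∑ x ∈ A, w x * τ' x := e2.symm
  · -- all jobs have positive overlap at the argmax
    push_neg at hz
    have hpos : ∀ j ∈ A, 0 < τs j :=
      fun j hj => lt_of_le_of_ne (hτsK.2.1 j hj) (Ne.symm (hz j hj))
    have hpre0 : preS A ord τs j1 = 0 := by
      have : A.filter (fun x => ord x < ord j1) = ∅ :=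
        Finset.filter_false_of_mem (fun x hx => not_lt.mpr (hj1min x hx))
      simp only [preS, this, Finset.sum_empty]
    by_cases ht : preS A ord τs j1 + 2 * τs j1 = p j1
    · -- commit the first job
      set a : ℝ := τs j1 with ha
      have ha2 : 2 * a = p j1 := by rw [ha]; linarith [hpre0 ▸ ht]
      have hanneg : 0 ≤ a := le_of_lt (hpos j1 hj1A)
      have hsub : A.erase j1 ⊂ A := Finset.erase_ssubset hj1A
      set p' : J → ℝ := fun x => p x - a with hp'
      have hj1mem : ∀ x ∈ A, x ≠ j1 → j1 ∈ A.filter (fun y => ord y < ord x) := by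
        intro x hx hne
        refine Finset.mem_filter.mpr ⟨hj1A, ?_⟩
        rcases lt_or_eq_of_le (hj1min x hx) with h | h
        · exact h
        · exact absurd (hinj hj1A hx h).symm hne
      have hpresplit : ∀ x ∈ A.erase j1,
          preS (A.erase j1) ord τs x = preS A ord τs x - a := by
        intro x hx
        have hxA := Finset.mem_of_mem_erase hx
        have hxne := Finset.ne_of_mem_erase hx
        have hfe : (A.erase j1).filter (fun y => ord y < ord x)
            = (A.filter (fun y => ord y < ord x)).erase j1 := by
          apply Finset.ext
          intro z
          simp only [Finset.mem_filter, Finset.mem_erase]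
          tauto
        simp only [preS, hfe]
        rw [Finset.sum_erase_eq_sub (hj1mem x hxA hxne)]
      set τh : J → ℝ := Function.update τs j1 0 with hτh
      have hτhval : ∀ x, x ≠ j1 → τh x = τs x := by
        intro x hx
        simp only [hτh, Function.update_of_ne hx]
      have hτhsum : ∀ s : Finset J, j1 ∉ s →
          ∀ f : J → ℝ, ∑ x ∈ s, f x * τh x = ∑ x ∈ s, f x * τs x := by
        intro s hs f
        apply Finset.sum_congr rfl
        intro x hx
        rw [hτhval x (fun h => hs (h ▸ hx))]
      have hpreh : ∀ x ∈ A.erase j1,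
          preS (A.erase j1) ord τh x = preS (A.erase j1) ord τs x := by
        intro x hx
        apply Finset.sum_congr rfl
        intro z hz
        have hz1 : z ≠ j1 := Finset.ne_of_mem_erase (Finset.mem_of_mem_filter z hz)
        exact hτhval z hz1
      have hτhatK : τh ∈ KSet (A.erase j1) ord p' := by
        refine ⟨?_, ?_, ?_⟩
        · intro x hx
          by_cases hxj : x = j1
          · subst hxj; simp [hτh]
          · rw [hτhval x hxj]
            exact hτsK.1 x (fun hxA => hx (Finset.mem_erase.mpr ⟨hxj, hxA⟩))
        · intro x hx
          rw [hτhval x (Finset.ne_of_mem_erase hx)]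
          exact hτsK.2.1 x (Finset.mem_of_mem_erase hx)
        · intro x hx
          rw [hpreh x hx, hpresplit x hx, hτhval x (Finset.ne_of_mem_erase hx)]
          have := hτsK.2.2 x (Finset.mem_of_mem_erase hx)
          simp only [hp']
          linarith
      have hp'2 : ∀ x ∈ A.erase j1, 0 ≤ p' x := by
        intro x hx
        have hxA := Finset.mem_of_mem_erase hx
        have hxne := Finset.ne_of_mem_erase hx
        have hale : a ≤ preS A ord τs x := by
          refine Finset.single_le_sum (f := τs) ?_ (hj1mem x hxA hxne)
          intro y hy
          exact hτsK.2.1 y (Finset.mem_filter.mp hy).1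
        have := hτsK.2.2 x hxA
        have h0 := hτsK.2.1 x hxA
        simp only [hp']
        linarith
      obtain ⟨τ'', hsync'', hsum''⟩ := IH (A.erase j1) hsub p' hp'2
        (fun x hx => hw x (Finset.mem_of_mem_erase hx))
        (hinj.mono (Finset.coe_subset.mpr (Finset.erase_subset _ _))) τh hτhatK
      have hτ''j1 : τ'' j1 = 0 := hsync''.1 j1 (Finset.notMem_erase j1 A)
      set τ' : J → ℝ := Function.update τ'' j1 a with hτ'
      have hτ'j1 : τ' j1 = a := by simp [hτ']
      have hτ'val : ∀ x, x ≠ j1 → τ' x = τ'' x := by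
        intro x hx
        simp only [hτ', Function.update_of_ne hx]
      refine ⟨τ', ⟨?_, ?_, ?_⟩, ?_⟩
      · intro x hx
        have hxj : x ≠ j1 := fun h => hx (h ▸ hj1A)
        rw [hτ'val x hxj]
        exact hsync''.1 x (fun hxe => hx (Finset.mem_of_mem_erase hxe))
      · intro x hx
        by_cases hxj : x = j1
        · subst hxj
          rw [hτ'j1]
          exact ⟨hanneg, by linarith⟩
        · rw [hτ'val x hxj]
          have := hsync''.2.1 x (Finset.mem_erase.mpr ⟨hxj, hx⟩)
          simp only [hp'] at this
          exact ⟨this.1, by linarith [this.2]⟩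
      · intro x hx x' hx' hne h0 h0'
        by_cases hxj : x = j1
        · left
          have hx'j : x' ≠ j1 := fun h => hne (hxj.trans h.symm)
          rw [hxj, hτ'j1, hτ'val x' hx'j]
          have := (hsync''.2.1 x' (Finset.mem_erase.mpr ⟨hx'j, hx'⟩)).2
          simp only [hp'] at this
          linarith
        · by_cases hx'j : x' = j1
          · right
            rw [hx'j, hτ'j1, hτ'val x hxj]
            have := (hsync''.2.1 x (Finset.mem_erase.mpr ⟨hxj, hx⟩)).2
            simp only [hp'] at this
            linarith
          · rw [hτ'val x hxj, hτ'val x' hx'j]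
            have := hsync''.2.2 x (Finset.mem_erase.mpr ⟨hxj, hx⟩)
              x' (Finset.mem_erase.mpr ⟨hx'j, hx'⟩) hne
              (by rw [← hτ'val x hxj]; exact h0) (by rw [← hτ'val x' hx'j]; exact h0')
            simp only [hp'] at this
            rcases this with h | h
            · left; linarith
            · right; linarith
      · have e1 : ∑ x ∈ A, w x * τs x
            = w j1 * a + ∑ x ∈ A.erase j1, w x * τs x := by
          rw [← Finset.add_sum_erase _ _ hj1A, ha]
        have e2 : ∑ x ∈ A, w x * τ' x
            = w j1 * a + ∑ x ∈ A.erase j1, w x * τ'' x := by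
          rw [← Finset.add_sum_erase _ _ hj1A, hτ'j1]
          congr 1
          apply Finset.sum_congr rfl
          intro x hx
          rw [hτ'val x (Finset.ne_of_mem_erase hx)]
        have e3 : ∑ x ∈ A.erase j1, w x * τs x = ∑ x ∈ A.erase j1, w x * τh x :=
          (hτhsum _ (Finset.notMem_erase j1 A) w).symm
        calc ∑ x ∈ A, w x * τ x ≤ ∑ x ∈ A, w x * τs x := hτval
          _ = w j1 * a + ∑ x ∈ A.erase j1, w x * τs x := e1
          _ = w j1 * a + ∑ x ∈ A.erase j1, w x * τh x := by rw [e3]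
          _ ≤ w j1 * a + ∑ x ∈ A.erase j1, w x * τ'' x := by linarith [hsum'']
          _ = ∑ x ∈ A, w x * τ' x := e2.symm
    · -- cascade contradiction
      exfalso
      have hslack : preS A ord τs j1 + 2 * τs j1 < p j1 :=
        lt_of_le_of_ne (hτsK.2.2 j1 hj1A) ht
      obtain ⟨co, δ0, hδ0, hco1, hK⟩ :=
        cascade A ord p hinj τs hτsK j1 hj1A hj1min hpos hslack
      set κ : ℝ := ∑ j ∈ A, w j * co j with hκ
      have hΦε : ∀ ε : ℝ, Φ (fun j => τs j + ε * co j) = Φ τs + ε * κ := by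
        intro ε
        simp only [hΦ, hκ, Finset.mul_sum]
        rw [← Finset.sum_add_distrib]
        apply Finset.sum_congr rfl
        intros; ring
      have h1 : Φ τs + δ0 * κ ≤ Φ τs := by
        have := hτsmax _ (hK δ0 (by rw [abs_of_pos hδ0]))
        rwa [hΦε] at this
      have h2 : Φ τs + (-δ0) * κ ≤ Φ τs := by
        have := hτsmax _ (hK (-δ0) (by rw [abs_neg, abs_of_pos hδ0]))
        rwa [hΦε] at this
      have hκ0 : κ = 0 := by
        rcases lt_trichotomy κ 0 with h | h | h
        · nlinarith
        · exact h
        · nlinarith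
      have hmem : (fun j => τs j + δ0 * co j) ∈ G := by
        refine ⟨hK δ0 (by rw [abs_of_pos hδ0]), ?_⟩
        simp only [Set.mem_setOf_eq]
        rw [hΦε, hκ0, mul_zero, add_zero]
        exact hτsG.2
      have := hmax1 hmem
      simp only [Set.mem_setOf_eq] at this
      have : τs j1 + δ0 * co j1 ≤ τs j1 := this
      rw [hco1] at this
      linarith

theorem overlap_eq (S : Schedule J m p) (j : J) :
    S.overlap j = ∑ q ∈ S.iv j, (min (S.c j) q.2 - min (S.c j) q.1) := by
  apply Finset.sum_congr rfl
  intro q hq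
  obtain ⟨h0, h1⟩ := S.iv_valid j q hq
  by_cases h : q.1 ≤ S.c j
  · rw [min_eq_right h]
    rw [max_eq_right]
    have : q.1 ≤ min (S.c j) q.2 := le_min h h1
    linarith
  · push_neg at h
    have e1 : min (S.c j) q.1 = S.c j := min_eq_left (le_of_lt h)
    have e2 : min (S.c j) q.2 = S.c j := min_eq_left (le_trans (le_of_lt h) h1)
    rw [e1, e2, max_eq_left]
    · ring
    · linarith

theorem overlap_nonneg (S : Schedule J m p) (j : J) : 0 ≤ S.overlap j :=
  Finset.sum_nonneg (fun q _ => le_max_left _ _)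

theorem overlap_le (S : Schedule J m p) (j : J) : S.overlap j ≤ p j - S.c j := by
  have := S.total j
  have hle : S.overlap j ≤ ∑ q ∈ S.iv j, (q.2 - q.1) := by
    apply Finset.sum_le_sum
    intro q hq
    obtain ⟨h0, h1⟩ := S.iv_valid j q hq
    apply max_le
    · linarith
    · have : min (S.c j) q.2 ≤ q.2 := min_le_right _ _
      linarith
  linarith

/-- Disjoint useful parts: total overlap of jobs on one processor whose
private completion times are at most `C` is at most `C`. -/
theorem sum_overlap_le (S : Schedule J m p) (v : Fin m) (B : Finset J) (C : ℝ)
    (hB : ∀ x ∈ B, S.mu x = v) (hC : ∀ x ∈ B, S.c x ≤ C) (hC0 : 0 ≤ C) :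
    ∑ x ∈ B, S.overlap x ≤ C := by
  have hre : ∑ x ∈ B, S.overlap x
      = ∑ y ∈ B.sigma (fun x => S.iv x),
          (min (S.c y.1) y.2.2 - min (S.c y.1) y.2.1) := by
    rw [Finset.sum_sigma]
    exact Finset.sum_congr rfl (fun x _ => overlap_eq S x)
  rw [hre]
  have hgoal := sum_len_le (B.sigma (fun x => S.iv x))
    (fun y => min (S.c y.1) y.2.1) (fun y => min (S.c y.1) y.2.2) C hC0
  refine (by exact fun h1 h2 => hgoal h1 h2 :
    _ → _ → ∑ y ∈ B.sigma (fun x => S.iv x),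
      (min (S.c y.1) y.2.2 - min (S.c y.1) y.2.1) ≤ C) ?_ ?_
  · rintro ⟨x, q⟩ hy
    obtain ⟨hxB, hq⟩ := Finset.mem_sigma.mp hy
    obtain ⟨h0, h1⟩ := S.iv_valid x q hq
    refine ⟨le_min (S.c_nonneg x) h0, min_le_min (le_refl _) h1, ?_⟩
    exact le_trans (min_le_left _ _) (hC x hxB)
  · rintro ⟨x, q⟩ hy ⟨x', q'⟩ hy' hne hlt hlt'
    obtain ⟨hxB, hq⟩ := Finset.mem_sigma.mp hy
    obtain ⟨hx'B, hq'⟩ := Finset.mem_sigma.mp hy'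
    have key : ∀ (z : J) (r : ℝ × ℝ), r ∈ S.iv z →
        min (S.c z) r.1 < min (S.c z) r.2 → min (S.c z) r.1 = r.1 := by
      intro z r hr hlt2
      by_contra hcon
      have h2 : S.c z < r.1 := by
        rcases lt_or_ge (S.c z) r.1 with h | h
        · exact h
        · exact absurd (min_eq_right h) hcon
      have e1 : min (S.c z) r.1 = S.c z := min_eq_left (le_of_lt h2)
      have e2 : min (S.c z) r.2 ≤ S.c z := min_le_left _ _
      rw [e1] at hlt2
      linarith
    have ha : min (S.c x) q.1 = q.1 := key x q hq hlt
    have ha' : min (S.c x') q'.1 = q'.1 := key x' q' hq' hlt'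
    have hdisj : q.2 ≤ q'.1 ∨ q'.2 ≤ q.1 := by
      by_cases hxx : x = x'
      · subst hxx
        have hqq : q ≠ q' := by
          intro h
          exact hne (by rw [h])
        exact S.iv_disjoint x q hq q' hq' hqq
      · exact S.shared_disjoint x x' hxx ((hB x hxB).trans (hB x' hx'B).symm) q hq q' hq'
    rcases hdisj with h | h
    · left
      show min (S.c x) q.2 ≤ min (S.c x') q'.1
      rw [ha']
      exact le_trans (min_le_right _ _) h
    · right
      show min (S.c x') q'.2 ≤ min (S.c x) q.1
      rw [ha]
      exact le_trans (min_le_right _ _) h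

/-- There is an injective `ℕ`-valued ranking along which `f` is monotone. -/
theorem exists_ord (f : J → ℝ) :
    ∃ ord : J → ℕ, Function.Injective ord ∧ ∀ x y, ord x < ord y → f x ≤ f y := by
  set enc : J → ℕ := fun j => ((Fintype.equivFin J) j : ℕ) with henc
  have hencinj : Function.Injective enc := by
    intro x y h
    have := Fin.val_injective h
    exact (Fintype.equivFin J).injective this
  set klt : J → J → Prop := fun x y => f x < f y ∨ (f x = f y ∧ enc x < enc y) with hklt
  have htrans : ∀ x y z, klt x y → klt y z → klt x z := by
    intro x y z h1 h2
    rcases h1 with h1 | ⟨h1a, h1b⟩ <;> rcases h2 with h2 | ⟨h2a, h2b⟩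
    · exact Or.inl (lt_trans h1 h2)
    · exact Or.inl (h2a ▸ h1)
    · exact Or.inl (h1a ▸ h2)
    · exact Or.inr ⟨h1a.trans h2a, lt_trans h1b h2b⟩
  have htrich : ∀ x y, x ≠ y → klt x y ∨ klt y x := by
    intro x y hne
    rcases lt_trichotomy (f x) (f y) with h | h | h
    · exact Or.inl (Or.inl h)
    · rcases lt_or_gt_of_ne (fun hc => hne (hencinj hc)) with h2 | h2
      · exact Or.inl (Or.inr ⟨h, h2⟩)
      · exact Or.inr (Or.inr ⟨h.symm, h2⟩)
    · exact Or.inr (Or.inl h)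
  have hirr : ∀ x, ¬ klt x x := by
    intro x h
    rcases h with h | ⟨_, h⟩ <;> exact lt_irrefl _ h
  set ord : J → ℕ := fun j => (Finset.univ.filter (fun y => klt y j)).card with hord
  have hmono : ∀ x y, klt x y → ord x < ord y := by
    intro x y hxy
    apply Finset.card_lt_card
    constructor
    · intro z hz
      simp only [Finset.mem_filter, Finset.mem_univ, true_and] at hz ⊢
      exact htrans z x y hz hxy
    · intro hcon
      have hxmem : x ∈ Finset.univ.filter (fun z => klt z y) := by
        simp only [Finset.mem_filter, Finset.mem_univ, true_and]
        exact hxy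
      have := hcon hxmem
      simp only [Finset.mem_filter, Finset.mem_univ, true_and] at this
      exact hirr x this
  refine ⟨ord, ?_, ?_⟩
  · intro x y h
    by_contra hne
    rcases htrich x y hne with hk | hk
    · have := hmono x y hk
      omega
    · have := hmono y x hk
      omega
  · intro x y h
    by_contra hc
    push_neg at hc
    have : klt y x := Or.inl hc
    exact absurd (hmono y x this) (by omega)


/-- The (truncated) overlap vector of any schedule is chain-feasible on each
processor, for any order along which `c` is monotone. -/
theorem overlap_feas (S : Schedule J m p) (v : Fin m) (ord : J → ℕ)
    (hmono : ∀ x y, ord x < ord y → S.c x ≤ S.c y) :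
    (fun j => if j ∈ Finset.univ.filter (fun x => S.mu x = v) then S.overlap j else 0)
      ∈ KSet (Finset.univ.filter (fun x => S.mu x = v)) ord p := by
  set A : Finset J := Finset.univ.filter (fun x => S.mu x = v) with hA
  refine ⟨?_, ?_, ?_⟩
  · intro j hj
    simp [if_neg hj]
  · intro j hj
    show (0:ℝ) ≤ if j ∈ A then S.overlap j else 0
    rw [if_pos hj]
    exact overlap_nonneg S j
  · intro j hj
    have hmu : S.mu j = v := (Finset.mem_filter.mp hj).2
    have hpre : preS A ord (fun x => if x ∈ A then S.overlap x else 0) j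
        = ∑ x ∈ A.filter (fun x => ord x < ord j), S.overlap x := by
      apply Finset.sum_congr rfl
      intro x hx
      have hxA := Finset.mem_of_mem_filter x hx
      simp [hxA]
    show preS A ord (fun x => if x ∈ A then S.overlap x else 0) j
        + 2 * (if j ∈ A then S.overlap j else 0) ≤ p j
    rw [if_pos hj, hpre]
    have hjnot : j ∉ A.filter (fun x => ord x < ord j) := by
      intro h
      exact absurd (Finset.mem_filter.mp h).2 (lt_irrefl _)
    have hsum : ∑ x ∈ insert j (A.filter (fun x => ord x < ord j)), S.overlap x
        = S.overlap j + ∑ x ∈ A.filter (fun x => ord x < ord j), S.overlap x :=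
      Finset.sum_insert hjnot
    have h1 : ∑ x ∈ insert j (A.filter (fun x => ord x < ord j)), S.overlap x ≤ S.c j := by
      apply sum_overlap_le S v _ (S.c j)
      · intro x hx
        rcases Finset.mem_insert.mp hx with h | h
        · rw [h]; exact hmu
        · exact (Finset.mem_filter.mp (Finset.mem_of_mem_filter x h)).2
      · intro x hx
        rcases Finset.mem_insert.mp hx with h | h
        · rw [h]
        · exact hmono x j (Finset.mem_filter.mp h).2
      · exact S.c_nonneg j
    have h2 := overlap_le S j
    linarith [hsum ▸ h1]

/-- Build a synchronized schedule from a synchronized-feasible overlap profile. -/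
theorem sync_schedule (S : Schedule J m p) (hp : ∀ j, 0 ≤ p j) (t : J → ℝ)
    (h0 : ∀ j, 0 ≤ t j) (h2 : ∀ j, 2 * t j ≤ p j)
    (hdisj : ∀ j j', j ≠ j' → S.mu j = S.mu j' → t j ≠ 0 → t j' ≠ 0 →
      (p j - t j ≤ p j' - 2 * t j' ∨ p j' - t j' ≤ p j - 2 * t j)) :
    ∃ S' : Schedule J m p, S'.mu = S.mu ∧ (∀ j, S'.overlap j = t j) ∧ S'.Synchronized := by
  refine ⟨{ mu := S.mu,
            iv := fun j => if t j = 0 then (∅ : Finset (ℝ × ℝ))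
              else {(p j - 2 * t j, p j - t j)},
            c := fun j => p j - t j,
            c_nonneg := fun j => by have := h0 j; have := h2 j; linarith,
            iv_valid := ?_, iv_disjoint := ?_, total := ?_,
            shared_disjoint := ?_ }, rfl, ?_, ?_, ?_, ?_⟩
  · intro j q hq
    by_cases h : t j = 0
    · rw [if_pos h] at hq
      exact absurd hq (Finset.notMem_empty q)
    · rw [if_neg h] at hq
      have hq' := Finset.mem_singleton.mp hq
      subst hq'
      constructor
      · have := h2 j; linarith
      · have := h0 j; linarith
  · intro j q hq q' hq' hne
    by_cases h : t j = 0
    · rw [if_pos h] at hq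
      exact absurd hq (Finset.notMem_empty q)
    · rw [if_neg h] at hq hq'
      exact absurd ((Finset.mem_singleton.mp hq).trans
        (Finset.mem_singleton.mp hq').symm) hne
  · intro j
    by_cases h : t j = 0
    · rw [if_pos h, Finset.sum_empty, h]; ring
    · rw [if_neg h, Finset.sum_singleton]; ring
  · intro j j' hne hmu q hq q' hq'
    by_cases h : t j = 0
    · rw [if_pos h] at hq
      exact absurd hq (Finset.notMem_empty q)
    by_cases h' : t j' = 0
    · rw [if_pos h'] at hq'
      exact absurd hq' (Finset.notMem_empty q')
    rw [if_neg h] at hq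
    rw [if_neg h'] at hq'
    have e := Finset.mem_singleton.mp hq
    have e' := Finset.mem_singleton.mp hq'
    subst e; subst e'
    have := hdisj j j' hne hmu h h'
    rcases this with hd | hd
    · left; exact hd
    · right; exact hd
  · -- overlaps
    intro j
    simp only [Schedule.overlap]
    by_cases h : t j = 0
    · rw [if_pos h, Finset.sum_empty, h]
    · rw [if_neg h, Finset.sum_singleton]
      have hx : ((p j - 2 * t j, p j - t j) : ℝ × ℝ).1 = p j - 2 * t j := rfl
      have hy : ((p j - 2 * t j, p j - t j) : ℝ × ℝ).2 = p j - t j := rfl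
      rw [hx, hy, min_self, max_eq_right (by have := h0 j; linarith)]
      ring
  · -- Normal
    intro j
    simp only [Schedule.ftime]
    by_cases h : t j = 0
    · rw [if_pos h]
      simp only [Finset.image_empty, Finset.max_empty, WithBot.unbotD_bot]
      have := hp j; have := h0 j; have := h2 j
      linarith
    · rw [if_neg h]
      simp only [Finset.image_singleton, Finset.max_singleton, WithBot.unbotD_coe]
      exact le_refl _
  · -- NonPreemptive
    intro j
    simp only
    by_cases h : t j = 0
    · rw [if_pos h]; simp
    · rw [if_neg h]; simp
  · -- synchronized completion
    intro j hj
    simp only at hj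
    by_cases h : t j = 0
    · rw [if_pos h] at hj
      exact absurd rfl hj
    · simp only [Schedule.ftime]
      rw [if_neg h]
      simp only [Finset.image_singleton, Finset.max_singleton, WithBot.unbotD_coe]

end AuxProof

/-- If an optimal feasible schedule exists, then there exists
an optimal feasible schedule that is synchronized. -/
theorem exists_optimal_synchronized
    {J : Type} [Fintype J] [DecidableEq J] {m : ℕ} (hm : 1 ≤ m)
    (p w : J → ℝ) (hp : ∀ j, 0 < p j) (hw : ∀ j, 0 < w j)
    (hex : ∃ S : Schedule J m p, S.Optimal w) :
    ∃ S' : Schedule J m p, S'.Optimal w ∧ S'.Synchronized := by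
  classical
  obtain ⟨S, hS⟩ := hex
  obtain ⟨ord, hordinj, hordmono⟩ := exists_ord S.c
  have hcrux : ∀ v : Fin m, ∃ τ',
      SyncOn (Finset.univ.filter (fun x => S.mu x = v)) p τ' ∧
      (∑ j ∈ Finset.univ.filter (fun x => S.mu x = v), w j *
        (if j ∈ Finset.univ.filter (fun x => S.mu x = v) then S.overlap j else 0))
        ≤ ∑ j ∈ Finset.univ.filter (fun x => S.mu x = v), w j * τ' j := by
    intro v
    exact crux ord w _ p (fun j _ => le_of_lt (hp j)) (fun j _ => hw j)
      hordinj.injOn _ (overlap_feas S v ord hordmono)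
  choose τ' hsync hsum using hcrux
  set t : J → ℝ := fun j => τ' (S.mu j) j with ht
  have hmem : ∀ j : J, j ∈ Finset.univ.filter (fun x => S.mu x = S.mu j) := by
    intro j
    simp
  have htn : ∀ j, 0 ≤ t j ∧ 2 * t j ≤ p j := fun j => (hsync (S.mu j)).2.1 j (hmem j)
  have hdisj : ∀ j j', j ≠ j' → S.mu j = S.mu j' → t j ≠ 0 → t j' ≠ 0 →
      (p j - t j ≤ p j' - 2 * t j' ∨ p j' - t j' ≤ p j - 2 * t j) := by
    intro j j' hne hmu h h'
    have hj'mem : j' ∈ Finset.univ.filter (fun x => S.mu x = S.mu j) := by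
      simp [hmu.symm]
    have h2' : t j' = τ' (S.mu j) j' := by rw [ht]; simp only; rw [hmu]
    have := (hsync (S.mu j)).2.2 j (hmem j) j' hj'mem hne
      (by rw [ht] at h; exact h) (by rw [h2'] at h'; exact h')
    rw [ht] at *
    simp only at this ⊢
    rw [← h2'] at this
    exact this
  obtain ⟨S', hS'mu, hS'ov, hS'sync⟩ := sync_schedule S (fun j => le_of_lt (hp j)) t
    (fun j => (htn j).1) (fun j => (htn j).2) hdisj
  have homega : S.Omega w ≤ S'.Omega w := by
    have hfib1 : S.Omega w = ∑ v : Fin m, ∑ j ∈ Finset.univ.filter (fun x => S.mu x = v),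
        w j * S.overlap j := by
      rw [Finset.sum_fiberwise Finset.univ S.mu (fun j => w j * S.overlap j)]
      rfl
    have hfib2 : S'.Omega w = ∑ v : Fin m, ∑ j ∈ Finset.univ.filter (fun x => S.mu x = v),
        w j * t j := by
      have : S'.Omega w = ∑ j, w j * t j := by
        unfold Schedule.Omega
        exact Finset.sum_congr rfl (fun j _ => by rw [hS'ov j])
      rw [this, Finset.sum_fiberwise Finset.univ S.mu (fun j => w j * t j)]
    rw [hfib1, hfib2]
    apply Finset.sum_le_sum
    intro v _
    calc ∑ j ∈ Finset.univ.filter (fun x => S.mu x = v), w j * S.overlap j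
        = ∑ j ∈ Finset.univ.filter (fun x => S.mu x = v), w j *
            (if j ∈ Finset.univ.filter (fun x => S.mu x = v) then S.overlap j else 0) := by
          apply Finset.sum_congr rfl
          intro j hj
          rw [if_pos hj]
      _ ≤ ∑ j ∈ Finset.univ.filter (fun x => S.mu x = v), w j * τ' v j := hsum v
      _ = ∑ j ∈ Finset.univ.filter (fun x => S.mu x = v), w j * t j := by
          apply Finset.sum_congr rfl
          intro j hj
          have : S.mu j = v := (Finset.mem_filter.mp hj).2
          rw [ht]
          simp only
          rw [this]
  refine ⟨S', ?_, hS'sync⟩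
  intro S''
  exact le_trans (hS S'') homega
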